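/- Let N ≥ 1, 0 < ℓ < N, and set K(x) = |x|^{ℓ−N}. Let ψ be a Schwartz function on ℝ^N with ∫_{ℝ^N} ψ(x) dx = 1, and for λ ≥ 1 define p_λ(x) := λ^N ψ(λx) − λ^{−N} ψ(x/λ). Then for every x ∈ ℝ^N with x ≠ 0, the convolution (K * p_λ)(x) = ∫_{ℝ^N} K(x−y) p_λ(y) dy converges to K(x) as λ → ∞. -/

import Mathlib

open MeasureTheory Real Filter Metric Set Topology

lemma aux_ball1 (N : ℕ) {s : ℝ} (hsN : -(N:ℝ) < s) (hs0 : s < 0) :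
    IntegrableOn (fun v : EuclideanSpace ℝ (Fin N) => ‖v‖ ^ s) (Metric.ball 0 1) volume := by
  set E := EuclideanSpace ℝ (Fin N)
  set μ : Measure E := volume.restrict (Metric.ball 0 1) with hμ
  have hmeas : Measurable (fun v : E => ‖v‖ ^ s) := by fun_prop
  constructor
  · exact hmeas.aestronglyMeasurable
  · have hnn : ∀ v : E, 0 ≤ ‖v‖ ^ s := fun v => Real.rpow_nonneg (norm_nonneg v) s
    rw [HasFiniteIntegral, lintegral_enorm_of_nonneg hnn,
      lintegral_eq_lintegral_meas_le μ (Eventually.of_forall hnn) hmeas.aemeasurable]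
    have hsub : ∀ t : ℝ, 0 < t → {a : E | t ≤ ‖a‖ ^ s} ⊆ Metric.closedBall 0 (t ^ s⁻¹) := by
      intro t ht a ha
      simp only [mem_setOf_eq] at ha
      rcases eq_or_ne a 0 with rfl | ha0
      · exact absurd ha (by simp [Real.zero_rpow hs0.ne, not_le, ht])
      · have hna : 0 < ‖a‖ := norm_pos_iff.mpr ha0
        rw [Metric.mem_closedBall, dist_zero_right]
        exact (Real.le_rpow_inv_iff_of_neg hna ht hs0).mpr ha
    calc
      ∫⁻ t in Ioi (0:ℝ), μ {a : E | t ≤ ‖a‖ ^ s}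
          ≤ ∫⁻ t in Ioc (0:ℝ) 1 ∪ Ioi 1, μ {a : E | t ≤ ‖a‖ ^ s} :=
        lintegral_mono_set Ioi_subset_Ioc_union_Ioi
      _ ≤ (∫⁻ t in Ioc (0:ℝ) 1, μ {a : E | t ≤ ‖a‖ ^ s})
            + ∫⁻ t in Ioi (1:ℝ), μ {a : E | t ≤ ‖a‖ ^ s} := lintegral_union_le _ _ _
      _ < ⊤ := by
        refine ENNReal.add_lt_top.2 ⟨?_, ?_⟩
        · calc
            ∫⁻ t in Ioc (0:ℝ) 1, μ {a : E | t ≤ ‖a‖ ^ s}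
                ≤ ∫⁻ _ in Ioc (0:ℝ) 1, volume (Metric.ball (0:E) 1) := by
              refine lintegral_mono fun t => ?_
              calc μ {a : E | t ≤ ‖a‖ ^ s} ≤ μ univ := measure_mono (subset_univ _)
                _ = volume (Metric.ball (0:E) 1) := by
                  rw [hμ, Measure.restrict_apply_univ]
            _ < ⊤ := by
              rw [setLIntegral_const]
              exact ENNReal.mul_lt_top measure_ball_lt_top (by simp)
        · have hb : ∀ t ∈ Ioi (1:ℝ), μ {a : E | t ≤ ‖a‖ ^ s}
              ≤ ENNReal.ofReal (t ^ (s⁻¹ * N)) * volume (Metric.ball (0:E) 1) := by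
            intro t ht
            have ht0 : (0:ℝ) < t := lt_trans one_pos ht
            calc μ {a : E | t ≤ ‖a‖ ^ s}
                ≤ volume {a : E | t ≤ ‖a‖ ^ s} := Measure.restrict_le_self _
              _ ≤ volume (Metric.closedBall (0:E) (t ^ s⁻¹)) :=
                measure_mono (hsub t ht0)
              _ = ENNReal.ofReal ((t ^ s⁻¹) ^ Module.finrank ℝ E) *
                    volume (Metric.ball (0:E) 1) :=
                Measure.addHaar_closedBall _ _ (Real.rpow_nonneg ht0.le _)
              _ = ENNReal.ofReal (t ^ (s⁻¹ * N)) * volume (Metric.ball (0:E) 1) := by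
                rw [← Real.rpow_natCast (t ^ s⁻¹) (Module.finrank ℝ E),
                  ← Real.rpow_mul ht0.le, finrank_euclideanSpace_fin]
          calc
            ∫⁻ t in Ioi (1:ℝ), μ {a : E | t ≤ ‖a‖ ^ s}
                ≤ ∫⁻ t in Ioi (1:ℝ),
                    ENNReal.ofReal (t ^ (s⁻¹ * N)) * volume (Metric.ball (0:E) 1) :=
              setLIntegral_mono' measurableSet_Ioi hb
            _ = (∫⁻ t in Ioi (1:ℝ), ENNReal.ofReal (t ^ (s⁻¹ * N)))
                  * volume (Metric.ball (0:E) 1) :=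
              lintegral_mul_const' _ _ measure_ball_lt_top.ne
            _ < ⊤ := by
              refine ENNReal.mul_lt_top ?_ measure_ball_lt_top
              refine IntegrableOn.setLIntegral_lt_top ?_
              refine integrableOn_Ioi_rpow_of_lt ?_ one_pos
              rw [inv_mul_eq_div, div_lt_iff_of_neg hs0]
              linarith

lemma aux_ballr (N : ℕ) {s : ℝ} (hsN : -(N:ℝ) < s) (hs0 : s < 0) (r : ℝ) :
    IntegrableOn (fun v : EuclideanSpace ℝ (Fin N) => ‖v‖ ^ s) (Metric.ball 0 r) volume := by
  have h1 : IntegrableOn (fun v : EuclideanSpace ℝ (Fin N) => ‖v‖ ^ s)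
      (Metric.ball 0 1 ∪ (Metric.ball 0 r \ Metric.ball 0 1)) volume := by
    refine integrableOn_union.2 ⟨aux_ball1 N hsN hs0, ?_⟩
    have hmeasT : MeasurableSet
        (Metric.ball (0:EuclideanSpace ℝ (Fin N)) r \ Metric.ball 0 1) :=
      measurableSet_ball.diff measurableSet_ball
    refine Integrable.mono' (g := fun _ => (1:ℝ)) ?_ ?_ ?_
    · refine integrableOn_const (ne_of_lt ?_)
      exact lt_of_le_of_lt (measure_mono diff_subset) measure_ball_lt_top
    · exact (by fun_prop :
        Measurable (fun v : EuclideanSpace ℝ (Fin N) => ‖v‖ ^ s)).aestronglyMeasurable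
    · filter_upwards [ae_restrict_mem hmeasT] with a ha
      have h1a : 1 ≤ ‖a‖ := by
        have := ha.2
        simpa [Metric.mem_ball, dist_zero_right, not_lt] using this
      rw [Real.norm_eq_abs, abs_of_nonneg (Real.rpow_nonneg (norm_nonneg a) s)]
      exact Real.rpow_le_one_of_one_le_of_nonpos h1a hs0.le
  refine h1.mono_set fun v hv => ?_
  by_cases h : v ∈ Metric.ball (0:EuclideanSpace ℝ (Fin N)) 1
  · exact Or.inl h
  · exact Or.inr ⟨hv, h⟩

lemma aux_ind (N : ℕ) (s : ℝ) (u : EuclideanSpace ℝ (Fin N)) (r : ℝ) :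
    (Metric.ball u r).indicator (fun w : EuclideanSpace ℝ (Fin N) => ‖u - w‖ ^ s)
      = fun w : EuclideanSpace ℝ (Fin N) =>
        (Metric.ball (0:EuclideanSpace ℝ (Fin N)) r).indicator
          (fun v => ‖v‖ ^ s) (u - w) := by
  funext w
  by_cases h : w ∈ Metric.ball u r
  · have h' : u - w ∈ Metric.ball (0:EuclideanSpace ℝ (Fin N)) r := by
      rw [Metric.mem_ball, dist_zero_right, norm_sub_rev]
      rwa [Metric.mem_ball, dist_eq_norm] at h
    rw [Set.indicator_of_mem h, Set.indicator_of_mem h']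
  · have h' : u - w ∉ Metric.ball (0:EuclideanSpace ℝ (Fin N)) r := by
      rw [Metric.mem_ball, dist_zero_right, norm_sub_rev]
      rwa [Metric.mem_ball, dist_eq_norm] at h
    rw [Set.indicator_of_notMem h, Set.indicator_of_notMem h']

lemma aux_ball_center' (N : ℕ) {s : ℝ} (hsN : -(N:ℝ) < s) (hs0 : s < 0)
    (u : EuclideanSpace ℝ (Fin N)) (r : ℝ) :
    IntegrableOn (fun w : EuclideanSpace ℝ (Fin N) => ‖u - w‖ ^ s)
      (Metric.ball u r) volume := by
  rw [← integrable_indicator_iff measurableSet_ball, aux_ind]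
  exact ((integrable_indicator_iff measurableSet_ball).2 (aux_ballr N hsN hs0 r)).comp_sub_left u

lemma aux_kernel_mul (N : ℕ) {s : ℝ} (hsN : -(N:ℝ) < s) (hs0 : s < 0)
    (u : EuclideanSpace ℝ (Fin N)) {g : EuclideanSpace ℝ (Fin N) → ℝ}
    (hg : Integrable g volume) {C : ℝ} (hb : ∀ w, ‖g w‖ ≤ C) :
    Integrable (fun w => ‖u - w‖ ^ s * g w) volume := by
  have hkm : Measurable (fun w : EuclideanSpace ℝ (Fin N) => ‖u - w‖ ^ s) := by fun_prop
  have hm : AEStronglyMeasurable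
      (fun w : EuclideanSpace ℝ (Fin N) => ‖u - w‖ ^ s * g w) volume :=
    hkm.aestronglyMeasurable.mul hg.1
  rw [← integrableOn_univ, ← Set.union_compl_self (Metric.ball u 1)]
  refine integrableOn_union.2 ⟨?_, ?_⟩
  · refine Integrable.mono' (g := fun w => C * ‖u - w‖ ^ s)
      ((aux_ball_center' N hsN hs0 u 1).const_mul C) hm.restrict ?_
    refine Eventually.of_forall fun w => ?_
    have hk0 : 0 ≤ ‖u - w‖ ^ s := Real.rpow_nonneg (norm_nonneg _) s
    calc ‖‖u - w‖ ^ s * g w‖ = ‖u - w‖ ^ s * ‖g w‖ := by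
          rw [norm_mul, Real.norm_eq_abs, abs_of_nonneg hk0]
      _ ≤ ‖u - w‖ ^ s * C := mul_le_mul_of_nonneg_left (hb w) hk0
      _ = C * ‖u - w‖ ^ s := mul_comm _ _
  · refine Integrable.mono' (g := fun w => ‖g w‖) hg.norm.integrableOn hm.restrict ?_
    filter_upwards [ae_restrict_mem measurableSet_ball.compl] with w hw
    have h1 : 1 ≤ ‖u - w‖ := by
      have h2 : ¬ dist u w < 1 := by simpa [Metric.mem_ball, dist_comm] using hw
      have h3 : (1:ℝ) ≤ dist u w := not_lt.mp h2
      rwa [dist_eq_norm] at h3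
    have hk1 : ‖u - w‖ ^ s ≤ 1 := Real.rpow_le_one_of_one_le_of_nonpos h1 hs0.le
    calc ‖‖u - w‖ ^ s * g w‖ = ‖u - w‖ ^ s * ‖g w‖ := by
          rw [norm_mul, Real.norm_eq_abs, abs_of_nonneg (Real.rpow_nonneg (norm_nonneg _) s)]
      _ ≤ 1 * ‖g w‖ := mul_le_mul_of_nonneg_right hk1 (norm_nonneg _)
      _ = ‖g w‖ := one_mul _

lemma aux_unif (N : ℕ) {s : ℝ} (hsN : -(N:ℝ) < s) (hs0 : s < 0)
    (ψ : SchwartzMap (EuclideanSpace ℝ (Fin N)) ℝ) :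
    ∃ M : ℝ, 0 ≤ M ∧ ∀ u : EuclideanSpace ℝ (Fin N),
      |∫ w, ‖u - w‖ ^ s * ψ w| ≤ M := by
  obtain ⟨C₀, hC₀pos, hC₀⟩ := ψ.decay 0 0
  have hψb : ∀ w, ‖ψ w‖ ≤ C₀ := fun w => by
    simpa [norm_iteratedFDeriv_zero] using hC₀ w
  set c₁ : ℝ := ∫ v, (Metric.ball (0:EuclideanSpace ℝ (Fin N)) 1).indicator
      (fun v => ‖v‖ ^ s) v with hc₁
  have hc₁0 : 0 ≤ c₁ := integral_nonneg fun v =>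
    Set.indicator_nonneg (fun v _ => Real.rpow_nonneg (norm_nonneg v) s) v
  refine ⟨c₁ * C₀ + ∫ w, ‖ψ w‖, by positivity, fun u => ?_⟩
  have hker : IntegrableOn (fun w : EuclideanSpace ℝ (Fin N) => ‖u - w‖ ^ s)
      (Metric.ball u 1) volume := aux_ball_center' N hsN hs0 u 1
  have hint : Integrable (fun w => ‖u - w‖ ^ s * ‖ψ w‖) volume :=
    aux_kernel_mul N hsN hs0 u ψ.integrable.norm
      (C := C₀) (fun w => by simpa using hψb w)
  have habs : |∫ w, ‖u - w‖ ^ s * ψ w| ≤ ∫ w, ‖u - w‖ ^ s * ‖ψ w‖ := by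
    rw [← Real.norm_eq_abs]
    refine (norm_integral_le_integral_norm _).trans_eq ?_
    congr 1; funext w
    rw [norm_mul, Real.norm_eq_abs (‖u - w‖ ^ s),
      abs_of_nonneg (Real.rpow_nonneg (norm_nonneg _) s)]
  refine habs.trans ?_
  rw [← integral_add_compl (measurableSet_ball (x := u) (ε := (1:ℝ))) hint]
  have hpart1 : ∫ w in Metric.ball u 1, ‖u - w‖ ^ s * ‖ψ w‖ ≤ c₁ * C₀ := by
    have hle : ∫ w in Metric.ball u 1, ‖u - w‖ ^ s * ‖ψ w‖
        ≤ ∫ w in Metric.ball u 1, ‖u - w‖ ^ s * C₀ := by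
      refine setIntegral_mono_on hint.integrableOn (hker.mul_const C₀)
        measurableSet_ball fun w _ => ?_
      exact mul_le_mul_of_nonneg_left (hψb w) (Real.rpow_nonneg (norm_nonneg _) s)
    refine hle.trans ?_
    rw [integral_mul_const]
    have : ∫ w in Metric.ball u 1, ‖u - w‖ ^ s = c₁ := by
      rw [← integral_indicator measurableSet_ball, aux_ind, hc₁]
      exact integral_sub_left_eq_self _ volume u
    rw [this]
  have hpart2 : ∫ w in (Metric.ball u 1)ᶜ, ‖u - w‖ ^ s * ‖ψ w‖ ≤ ∫ w, ‖ψ w‖ := by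
    have hle : ∫ w in (Metric.ball u 1)ᶜ, ‖u - w‖ ^ s * ‖ψ w‖
        ≤ ∫ w in (Metric.ball u 1)ᶜ, ‖ψ w‖ := by
      refine setIntegral_mono_on hint.integrableOn ψ.integrable.norm.integrableOn
        measurableSet_ball.compl fun w hw => ?_
      have h1 : 1 ≤ ‖u - w‖ := by
        have h2 : ¬ dist u w < 1 := by simpa [Metric.mem_ball, dist_comm] using hw
        have h3 : (1:ℝ) ≤ dist u w := not_lt.mp h2
        rwa [dist_eq_norm] at h3
      calc ‖u - w‖ ^ s * ‖ψ w‖ ≤ 1 * ‖ψ w‖ :=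
            mul_le_mul_of_nonneg_right
              (Real.rpow_le_one_of_one_le_of_nonpos h1 hs0.le) (norm_nonneg _)
        _ = ‖ψ w‖ := one_mul _
    refine hle.trans ?_
    exact setIntegral_le_integral ψ.integrable.norm
      (Eventually.of_forall fun w => norm_nonneg _)
  linarith

set_option maxHeartbeats 1000000 in
/-- The Claim of Section 4: `(K * p_λ)(x) → K(x)` as `λ → ∞` for `x ≠ 0`, where
`K(x) = |x|^{ℓ-N}` and `p_λ(x) = λ^N ψ(λx) - λ^{-N} ψ(x/λ)` with `∫ ψ = 1`. -/
theorem convolution_approx_tendsto (N : ℕ) (hN : 1 ≤ N) (ℓ : ℝ)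
    (hℓ0 : 0 < ℓ) (hℓN : ℓ < N)
    (ψ : SchwartzMap (EuclideanSpace ℝ (Fin N)) ℝ)
    (hψ : ∫ x, ψ x = 1)
    (x : EuclideanSpace ℝ (Fin N)) (hx : x ≠ 0) :
    Tendsto (fun lam : ℝ =>
        ∫ y, ‖x - y‖ ^ (ℓ - (N : ℝ)) *
          (lam ^ (N : ℕ) * ψ (lam • y) - (lam ^ (N : ℕ))⁻¹ * ψ (lam⁻¹ • y)))
      atTop (nhds (‖x‖ ^ (ℓ - (N : ℝ)))) := by
  have hE : Module.finrank ℝ (EuclideanSpace ℝ (Fin N)) = N := finrank_euclideanSpace_fin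
  set s : ℝ := ℓ - (N:ℝ) with hsdef
  have hs0 : s < 0 := by rw [hsdef]; linarith
  have hsN : -(N:ℝ) < s := by rw [hsdef]; linarith
  have hx0 : (0:ℝ) < ‖x‖ := norm_pos_iff.mpr hx
  obtain ⟨C₀, hC₀pos, hC₀⟩ := ψ.decay 0 0
  have hψb : ∀ w, ‖ψ w‖ ≤ C₀ := fun w => by
    simpa [norm_iteratedFDeriv_zero] using hC₀ w
  obtain ⟨Ck, hCkpos, hCk⟩ := ψ.decay (N+1) 0
  have hψk : ∀ w, ‖w‖ ^ (N+1) * ‖ψ w‖ ≤ Ck := fun w => by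
    simpa [norm_iteratedFDeriv_zero] using hCk w
  -- the near/far splitting sets
  set S : ℝ → Set (EuclideanSpace ℝ (Fin N)) :=
    fun lam => {z | ‖x‖ / 2 ≤ ‖x - lam⁻¹ • z‖} with hSdef
  have hSmeas : ∀ lam : ℝ, MeasurableSet (S lam) := by
    intro lam
    have hcont : Continuous fun z : EuclideanSpace ℝ (Fin N) => ‖x - lam⁻¹ • z‖ :=
      (continuous_const.sub (continuous_const_smul _)).norm
    exact measurableSet_le measurable_const hcont.measurable
  -- the rescaled integrand after the change of variables z = lam • y
  set f : ℝ → EuclideanSpace ℝ (Fin N) → ℝ :=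
    fun lam z => ‖x - lam⁻¹ • z‖ ^ s * ψ z with hfdef
  have hfm : ∀ lam : ℝ, Measurable (f lam) := by
    intro lam
    exact ((by fun_prop : Measurable
        (fun z : EuclideanSpace ℝ (Fin N) => ‖x - lam⁻¹ • z‖ ^ s))).mul
      ψ.continuous.measurable
  have hfint : ∀ lam : ℝ, lam ≠ 0 → Integrable (f lam) volume := by
    intro lam hne
    have hg : Integrable (fun w : EuclideanSpace ℝ (Fin N) => ψ (lam • w)) volume :=
      (integrable_comp_smul_iff volume (fun w => ψ w) hne).2 ψ.integrable
    have hinner : Integrable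
        (fun w : EuclideanSpace ℝ (Fin N) => ‖x - w‖ ^ s * ψ (lam • w)) volume :=
      aux_kernel_mul N hsN hs0 x hg (C := C₀) (fun w => hψb _)
    have hcomp := (integrable_comp_smul_iff volume
        (fun w : EuclideanSpace ℝ (Fin N) => ‖x - w‖ ^ s * ψ (lam • w))
        (inv_ne_zero hne)).2 hinner
    simpa [hfdef, smul_inv_smul₀ hne] using hcomp
  -- Part 3: the spreading term tends to 0
  obtain ⟨M, hM0, hM⟩ := aux_unif N hsN hs0 ψ
  have h3 : Tendsto (fun lam : ℝ => ∫ w, ‖x - lam • w‖ ^ s * ψ w) atTop (𝓝 0) := by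
    have hlim : Tendsto (fun lam : ℝ => lam ^ s * M) atTop (𝓝 0) := by
      have h := (tendsto_rpow_neg_atTop (by linarith : (0:ℝ) < -s)).mul_const M
      rw [zero_mul] at h
      simpa [neg_neg] using h
    refine squeeze_zero_norm' ?_ hlim
    filter_upwards [eventually_ge_atTop (1:ℝ)] with lam hlam
    have hlam0 : (0:ℝ) < lam := lt_of_lt_of_le one_pos hlam
    have hne : lam ≠ 0 := hlam0.ne'
    have key : ∀ w : EuclideanSpace ℝ (Fin N),
        ‖x - lam • w‖ ^ s = lam ^ s * ‖lam⁻¹ • x - w‖ ^ s := by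
      intro w
      have h1 : x - lam • w = lam • (lam⁻¹ • x - w) := by
        rw [smul_sub, smul_inv_smul₀ hne]
      rw [h1, norm_smul, Real.norm_eq_abs, abs_of_pos hlam0,
        Real.mul_rpow hlam0.le (norm_nonneg _)]
    have heq : ∫ w, ‖x - lam • w‖ ^ s * ψ w
        = lam ^ s * ∫ w, ‖lam⁻¹ • x - w‖ ^ s * ψ w := by
      rw [← integral_const_mul]
      congr 1; funext w
      rw [key w, mul_assoc]
    rw [heq, Real.norm_eq_abs, abs_mul, abs_of_nonneg (Real.rpow_nonneg hlam0.le s)]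
    exact mul_le_mul_of_nonneg_left (hM _) (Real.rpow_nonneg hlam0.le s)
  -- far-region constant
  set g₂ : EuclideanSpace ℝ (Fin N) → ℝ :=
    (Metric.ball x (‖x‖/2)).indicator (fun v => ‖x - v‖ ^ s) with hg₂def
  have hg₂int : Integrable g₂ volume :=
    (integrable_indicator_iff measurableSet_ball).2 (aux_ball_center' N hsN hs0 x (‖x‖/2))
  set c₂ : ℝ := ∫ v, g₂ v with hc₂def
  have hc₂0 : 0 ≤ c₂ := integral_nonneg fun v =>
    Set.indicator_nonneg (fun v _ => Real.rpow_nonneg (norm_nonneg _) s) v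
  -- the indicator identity for the far region
  have heq2 : ∀ lam : ℝ, (fun z => g₂ (lam⁻¹ • z))
      = (S lam)ᶜ.indicator (fun z : EuclideanSpace ℝ (Fin N) => ‖x - lam⁻¹ • z‖ ^ s) := by
    intro lam
    funext z
    have hmem : lam⁻¹ • z ∈ Metric.ball x (‖x‖/2) ↔ z ∈ (S lam)ᶜ := by
      simp only [Metric.mem_ball, dist_eq_norm, hSdef, Set.mem_compl_iff,
        Set.mem_setOf_eq, not_le, norm_sub_rev (lam⁻¹ • z) x]
    by_cases h : z ∈ (S lam)ᶜ
    · rw [hg₂def, Set.indicator_of_mem (hmem.2 h), Set.indicator_of_mem h]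
    · rw [hg₂def, Set.indicator_of_notMem (fun hc => h (hmem.1 hc)),
        Set.indicator_of_notMem h]
  -- Part 2: the far part tends to 0
  have h2 : Tendsto (fun lam : ℝ => ∫ z in (S lam)ᶜ, f lam z) atTop (𝓝 0) := by
    set Cst : ℝ := Ck * c₂ / (‖x‖/2)^(N+1) with hCst
    have hlim : Tendsto (fun lam : ℝ => Cst * lam⁻¹) atTop (𝓝 0) := by
      have h := tendsto_inv_atTop_zero.const_mul Cst
      rwa [mul_zero] at h
    refine squeeze_zero_norm' ?_ hlim
    filter_upwards [eventually_ge_atTop (1:ℝ)] with lam hlam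
    have hlam0 : (0:ℝ) < lam := lt_of_lt_of_le one_pos hlam
    have hne : lam ≠ 0 := hlam0.ne'
    have hR : (0:ℝ) < lam * (‖x‖/2) := by positivity
    set D : ℝ := Ck / (lam * (‖x‖/2))^(N+1) with hD
    have hD0 : 0 ≤ D := by positivity
    -- integrability of kernel on far region
    have hI2 : IntegrableOn
        (fun z : EuclideanSpace ℝ (Fin N) => ‖x - lam⁻¹ • z‖ ^ s) (S lam)ᶜ volume := by
      have h := (integrable_comp_smul_iff volume g₂ (inv_ne_zero hne)).2 hg₂int
      rw [heq2 lam] at h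
      exact (integrable_indicator_iff (hSmeas lam).compl).1 h
    -- value of the kernel integral on the far region
    have hval : ∫ z in (S lam)ᶜ, ‖x - lam⁻¹ • z‖ ^ s = lam ^ N * c₂ := by
      rw [← integral_indicator (hSmeas lam).compl, ← heq2 lam,
        Measure.integral_comp_smul volume g₂ lam⁻¹, hE, smul_eq_mul, inv_pow, inv_inv,
        abs_of_pos (pow_pos hlam0 N), hc₂def]
    have hbound : ‖∫ z in (S lam)ᶜ, f lam z‖ ≤ D * (lam ^ N * c₂) := by
      calc ‖∫ z in (S lam)ᶜ, f lam z‖ ≤ ∫ z in (S lam)ᶜ, ‖f lam z‖ :=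
            norm_integral_le_integral_norm _
        _ ≤ ∫ z in (S lam)ᶜ, D * ‖x - lam⁻¹ • z‖ ^ s := by
            refine setIntegral_mono_on ((hfint lam hne).norm.integrableOn)
              (hI2.const_mul D) (hSmeas lam).compl fun z hz => ?_
            have hzlt : ‖x - lam⁻¹ • z‖ < ‖x‖/2 := by
              simpa [hSdef, Set.mem_compl_iff, Set.mem_setOf_eq, not_le] using hz
            have hzb : lam * (‖x‖/2) < ‖z‖ := by
              have h4 : ‖x‖ - ‖x - lam⁻¹ • z‖ ≤ ‖lam⁻¹ • z‖ := by
                have h5 := norm_sub_norm_le x (x - lam⁻¹ • z)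
                simpa using h5
              have h6 : ‖lam⁻¹ • z‖ = lam⁻¹ * ‖z‖ := by
                rw [norm_smul, Real.norm_eq_abs, abs_of_pos (inv_pos.2 hlam0)]
              have h7 : ‖x‖/2 < lam⁻¹ * ‖z‖ := by rw [← h6]; linarith
              have hzz : lam * (lam⁻¹ * ‖z‖) = ‖z‖ := by field_simp
              nlinarith [mul_lt_mul_of_pos_left h7 hlam0]
            have hψz : ‖ψ z‖ ≤ D := by
              rw [hD, le_div_iff₀ (pow_pos hR _)]
              have hpow : (lam * (‖x‖/2))^(N+1) ≤ ‖z‖^(N+1) :=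
                pow_le_pow_left₀ hR.le hzb.le _
              calc ‖ψ z‖ * (lam * (‖x‖/2))^(N+1) ≤ ‖ψ z‖ * ‖z‖^(N+1) :=
                    mul_le_mul_of_nonneg_left hpow (norm_nonneg _)
                _ = ‖z‖^(N+1) * ‖ψ z‖ := mul_comm _ _
                _ ≤ Ck := hψk z
            have hk0 : 0 ≤ ‖x - lam⁻¹ • z‖ ^ s := Real.rpow_nonneg (norm_nonneg _) s
            calc ‖f lam z‖ = ‖x - lam⁻¹ • z‖ ^ s * ‖ψ z‖ := by
                  rw [hfdef]
                  rw [norm_mul, Real.norm_eq_abs (‖x - lam⁻¹ • z‖ ^ s), abs_of_nonneg hk0]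
              _ ≤ ‖x - lam⁻¹ • z‖ ^ s * D := mul_le_mul_of_nonneg_left hψz hk0
              _ = D * ‖x - lam⁻¹ • z‖ ^ s := mul_comm _ _
        _ = D * ∫ z in (S lam)ᶜ, ‖x - lam⁻¹ • z‖ ^ s := integral_const_mul _ _
        _ = D * (lam ^ N * c₂) := by rw [hval]
    refine hbound.trans ?_
    have hxq : ((‖x‖/2):ℝ) ≠ 0 := by positivity
    have : D * (lam ^ N * c₂) = Cst * lam⁻¹ := by
      rw [hD, hCst, mul_pow]
      field_simp
      ring
    rw [this]
  -- Part 1: the near part tends to `K x` by dominated convergence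
  have h1 : Tendsto (fun lam : ℝ => ∫ z in S lam, f lam z) atTop (𝓝 (‖x‖ ^ s)) := by
    have hlimint : ∫ z, ‖x‖ ^ s * ψ z = ‖x‖ ^ s := by
      rw [integral_const_mul, hψ, mul_one]
    have hdct := tendsto_integral_filter_of_dominated_convergence
      (μ := volume) (l := atTop)
      (F := fun lam : ℝ => (S lam).indicator (f lam))
      (f := fun z : EuclideanSpace ℝ (Fin N) => ‖x‖ ^ s * ψ z)
      (bound := fun z => (‖x‖/2) ^ s * ‖ψ z‖)
      (Eventually.of_forall fun lam =>
        ((hfm lam).indicator (hSmeas lam)).aestronglyMeasurable)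
      ?_ ((ψ.integrable.norm).const_mul _) ?_
    · rw [hlimint] at hdct
      exact hdct.congr fun lam => integral_indicator (hSmeas lam)
    · refine Eventually.of_forall fun lam => Eventually.of_forall fun z => ?_
      show ‖(S lam).indicator (f lam) z‖ ≤ (‖x‖/2) ^ s * ‖ψ z‖
      by_cases hzS : z ∈ S lam
      · rw [Set.indicator_of_mem hzS]
        have hzge : ‖x‖/2 ≤ ‖x - lam⁻¹ • z‖ := hzS
        have hk : ‖x - lam⁻¹ • z‖ ^ s ≤ (‖x‖/2) ^ s :=
          Real.rpow_le_rpow_of_nonpos (half_pos hx0) hzge hs0.le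
        have hk0 : 0 ≤ ‖x - lam⁻¹ • z‖ ^ s := Real.rpow_nonneg (norm_nonneg _) s
        calc ‖f lam z‖ = ‖x - lam⁻¹ • z‖ ^ s * ‖ψ z‖ := by
              rw [hfdef]
              rw [norm_mul, Real.norm_eq_abs (‖x - lam⁻¹ • z‖ ^ s), abs_of_nonneg hk0]
          _ ≤ (‖x‖/2) ^ s * ‖ψ z‖ := mul_le_mul_of_nonneg_right hk (norm_nonneg _)
      · rw [Set.indicator_of_notMem hzS, norm_zero]
        positivity
    · refine Eventually.of_forall fun z => ?_
      have htf : Tendsto (fun lam : ℝ => f lam z) atTop (𝓝 (‖x‖ ^ s * ψ z)) := by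
        have h0 : Tendsto (fun lam : ℝ => x - lam⁻¹ • z) atTop (𝓝 x) := by
          have hz0 : Tendsto (fun lam : ℝ => lam⁻¹ • z) atTop
              (𝓝 ((0:ℝ) • z)) := tendsto_inv_atTop_zero.smul_const z
          rw [zero_smul] at hz0
          have := tendsto_const_nhds.sub hz0 (f := fun _ : ℝ => x)
          rwa [sub_zero] at this
        have hnorm : Tendsto (fun lam : ℝ => ‖x - lam⁻¹ • z‖) atTop (𝓝 ‖x‖) := h0.norm
        have hr : Tendsto (fun lam : ℝ => ‖x - lam⁻¹ • z‖ ^ s) atTop (𝓝 (‖x‖ ^ s)) :=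
          ((Real.continuousAt_rpow_const _ s (Or.inl hx0.ne')).tendsto).comp hnorm
        exact hr.mul_const (ψ z)
      have hev : ∀ᶠ lam : ℝ in atTop, f lam z = (S lam).indicator (f lam) z := by
        filter_upwards [eventually_ge_atTop (max 1 (2*‖z‖/‖x‖))] with lam hlam
        have hlam1 : (1:ℝ) ≤ lam := le_trans (le_max_left _ _) hlam
        have hlam0 : (0:ℝ) < lam := lt_of_lt_of_le one_pos hlam1
        have hz : z ∈ S lam := by
          show ‖x‖/2 ≤ ‖x - lam⁻¹ • z‖
          have hzn : ‖lam⁻¹ • z‖ ≤ ‖x‖/2 := by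
            rw [norm_smul, Real.norm_eq_abs, abs_of_pos (inv_pos.2 hlam0)]
            have h2 : 2*‖z‖/‖x‖ ≤ lam := le_trans (le_max_right _ _) hlam
            have h3 : 2*‖z‖ ≤ lam * ‖x‖ := (div_le_iff₀ hx0).mp h2
            rw [inv_mul_le_iff₀ hlam0]
            linarith
          have h4 := norm_sub_norm_le x (lam⁻¹ • z)
          linarith
        rw [Set.indicator_of_mem hz]
      exact htf.congr' hev
  -- assemble
  have hsum := (h1.add h2).sub h3
  rw [add_zero, sub_zero] at hsum
  refine Tendsto.congr' ?_ hsum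
  filter_upwards [eventually_ge_atTop (1:ℝ)] with lam hlam
  have hlam0 : (0:ℝ) < lam := lt_of_lt_of_le one_pos hlam
  have hne : lam ≠ 0 := hlam0.ne'
  have hpowpos : (0:ℝ) < lam ^ N := pow_pos hlam0 N
  -- integrability of the two original pieces
  have hg1 : Integrable (fun y : EuclideanSpace ℝ (Fin N) =>
      (lam:ℝ) ^ N * ψ (lam • y)) volume :=
    ((integrable_comp_smul_iff volume (fun w => ψ w) hne).2 ψ.integrable).const_mul _
  have hg2 : Integrable (fun y : EuclideanSpace ℝ (Fin N) =>
      ((lam:ℝ) ^ N)⁻¹ * ψ (lam⁻¹ • y)) volume :=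
    ((integrable_comp_smul_iff volume (fun w => ψ w) (inv_ne_zero hne)).2
      ψ.integrable).const_mul _
  have ht1 : Integrable (fun y : EuclideanSpace ℝ (Fin N) =>
      ‖x - y‖ ^ s * ((lam:ℝ) ^ N * ψ (lam • y))) volume := by
    refine aux_kernel_mul N hsN hs0 x hg1 (C := lam ^ N * C₀) fun y => ?_
    rw [norm_mul, Real.norm_eq_abs (lam ^ N), abs_of_pos hpowpos]
    exact mul_le_mul_of_nonneg_left (hψb _) hpowpos.le
  have ht2 : Integrable (fun y : EuclideanSpace ℝ (Fin N) =>
      ‖x - y‖ ^ s * (((lam:ℝ) ^ N)⁻¹ * ψ (lam⁻¹ • y))) volume := by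
    refine aux_kernel_mul N hsN hs0 x hg2 (C := (lam ^ N)⁻¹ * C₀) fun y => ?_
    rw [norm_mul, Real.norm_eq_abs ((lam ^ N)⁻¹), abs_of_pos (inv_pos.2 hpowpos)]
    exact mul_le_mul_of_nonneg_left (hψb _) (inv_pos.2 hpowpos).le
  -- change of variables for the first piece
  have hA : ∫ z, f lam z = ∫ y, ‖x - y‖ ^ s * ((lam:ℝ) ^ N * ψ (lam • y)) := by
    have hgoal : ∫ y, ‖x - y‖ ^ s * ((lam:ℝ) ^ N * ψ (lam • y))
        = lam ^ N * ∫ y, f lam (lam • y) := by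
      rw [← integral_const_mul]
      congr 1; funext y
      have hfl : f lam (lam • y) = ‖x - y‖ ^ s * ψ (lam • y) := by
        rw [hfdef]
        simp only [inv_smul_smul₀ hne]
      rw [hfl]; ring
    rw [hgoal, Measure.integral_comp_smul volume (f lam) lam, hE, smul_eq_mul,
      abs_of_pos (inv_pos.2 hpowpos), ← mul_assoc, mul_inv_cancel₀ hpowpos.ne', one_mul]
  -- change of variables for the second piece
  have hB : ∫ w, ‖x - lam • w‖ ^ s * ψ w
      = ∫ y, ‖x - y‖ ^ s * (((lam:ℝ) ^ N)⁻¹ * ψ (lam⁻¹ • y)) := by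
    have hgoal : ∫ y, ‖x - y‖ ^ s * (((lam:ℝ) ^ N)⁻¹ * ψ (lam⁻¹ • y))
        = (lam ^ N)⁻¹ * ∫ y, (fun w => ‖x - lam • w‖ ^ s * ψ w) (lam⁻¹ • y) := by
      rw [← integral_const_mul]
      congr 1; funext y
      have hfl : (fun w : EuclideanSpace ℝ (Fin N) => ‖x - lam • w‖ ^ s * ψ w) (lam⁻¹ • y)
          = ‖x - y‖ ^ s * ψ (lam⁻¹ • y) := by
        simp only [smul_inv_smul₀ hne]
      rw [hfl]; ring
    have hcs := Measure.integral_comp_smul volume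
      (fun w : EuclideanSpace ℝ (Fin N) => ‖x - lam • w‖ ^ s * ψ w) lam⁻¹
    rw [hE, inv_pow, inv_inv, abs_of_pos hpowpos, smul_eq_mul] at hcs
    rw [hgoal, hcs, ← mul_assoc, inv_mul_cancel₀ hpowpos.ne', one_mul]
  calc (∫ z in S lam, f lam z) + (∫ z in (S lam)ᶜ, f lam z)
        - ∫ w, ‖x - lam • w‖ ^ s * ψ w
      = (∫ z, f lam z) - ∫ w, ‖x - lam • w‖ ^ s * ψ w := by
        rw [integral_add_compl (hSmeas lam) (hfint lam hne)]
    _ = (∫ y, ‖x - y‖ ^ s * ((lam:ℝ) ^ N * ψ (lam • y)))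
          - ∫ y, ‖x - y‖ ^ s * (((lam:ℝ) ^ N)⁻¹ * ψ (lam⁻¹ • y)) := by
        rw [hA, hB]
    _ = ∫ y, (‖x - y‖ ^ s * ((lam:ℝ) ^ N * ψ (lam • y))
          - ‖x - y‖ ^ s * (((lam:ℝ) ^ N)⁻¹ * ψ (lam⁻¹ • y))) := (integral_sub ht1 ht2).symm
    _ = ∫ y, ‖x - y‖ ^ s *
          ((lam:ℝ) ^ N * ψ (lam • y) - ((lam:ℝ) ^ N)⁻¹ * ψ (lam⁻¹ • y)) := by
        congr 1; funext y; ring
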